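/- arXiv:2311.11490 — 7 statements merged into one kernel-verified Lean document; each statement's English description precedes it below -/
import Mathlib

section
/- Let P > 1 be a finite abelian p-group and G a finite p'-group acting faithfully by automorphisms on P. Let a be an integer with 1 ≤ a ≤ log_p(exp(P)), and let Γ be the set of elements of order exactly p^a in P. Then the number of orbits of G on Γ is at least p^(a-1). -/
private lemma stmt_4_aux (p a N : ℕ) (hp : p.Prime) (hpN : ¬ p ∣ N)
    (m n : ℤ) (hm : (m : ZMod p) = 1) (hn : (n : ZMod p) = 1)
    (h : (p : ℤ) ^ a ∣ m ^ N - n ^ N) : (p : ℤ) ^ a ∣ m - n := by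
  set S : ℤ := ∑ i ∈ Finset.range N, m ^ i * n ^ (N - 1 - i) with hS
  have hfac : S * (m - n) = m ^ N - n ^ N := geom_sum₂_mul m n N
  have hpZ : Prime (p : ℤ) := Nat.prime_iff_prime_int.mp hp
  have hSnd : ¬ (p : ℤ) ∣ S := by
    intro hd
    have h0 : ((S : ZMod p)) = 0 := by
      have := (ZMod.intCast_zmod_eq_zero_iff_dvd S p).mpr
      exact this (by exact_mod_cast hd)
    have hNz : ((N : ZMod p)) = 0 := by
      rw [← h0, hS]
      push_cast
      simp [hm, hn]
    exact hpN ((ZMod.natCast_eq_zero_iff N p).mp hNz)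
  have hcop : IsCoprime ((p : ℤ) ^ a) S :=
    ((hpZ.coprime_iff_not_dvd.mpr hSnd).pow_left)
  exact hcop.dvd_of_dvd_mul_left (by rw [hfac]; exact h)

theorem stmt_4 (p a : ℕ) (hp : p.Prime) (ha : 1 ≤ a)
    (P : Type*) [CommGroup P] [Fintype P] [Nontrivial P] (hP : IsPGroup p P)
    (G : Subgroup (MulAut P)) (hG : Nat.Coprime (Nat.card G) p)
    (hexp : p ^ a ∣ Monoid.exponent P) :
    p ^ (a - 1) ≤ Nat.card {ω : MulAction.orbitRel.Quotient G P //
      ∃ x : P, orderOf x = p ^ a ∧ Quotient.mk'' x = ω} := by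
  classical
  -- get an element of order p ^ a
  obtain ⟨y, hy⟩ := Monoid.exists_orderOf_eq_exponent (Monoid.ExponentExists.of_finite (G := P))
  have hdvd : p ^ a ∣ orderOf y := hy ▸ hexp
  have hyne : orderOf y ≠ 0 := (orderOf_pos y).ne'
  obtain ⟨x, hx⟩ : ∃ x : P, orderOf x = p ^ a :=
    ⟨y ^ (orderOf y / p ^ a), orderOf_pow_orderOf_div hyne hdvd⟩
  -- the elements x ^ (1 + p * c) all have order p ^ a
  have hord : ∀ c : ℕ, orderOf (x ^ (1 + p * c)) = p ^ a := by
    intro c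
    have hcop : Nat.Coprime (p ^ a) (1 + p * c) := by
      apply Nat.Coprime.pow_left
      rw [Nat.Prime.coprime_iff_not_dvd hp]
      intro hdd
      have : p ∣ 1 := (Nat.dvd_add_right (Dvd.intro c rfl)).mp (by rwa [Nat.add_comm] at hdd)
      exact hp.one_lt.ne' (Nat.dvd_one.mp this)
    rw [← hx]
    exact Nat.Coprime.orderOf_pow (by rw [hx]; exact hcop)
  set N := Nat.card G with hN
  have hpN : ¬ p ∣ N := by
    intro hdd
    have : p ∣ Nat.gcd N p := Nat.dvd_gcd hdd dvd_rfl
    rw [hG] at this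
    exact hp.one_lt.ne' (Nat.dvd_one.mp this)
  -- the map
  let f : Fin (p ^ (a - 1)) → {ω : MulAction.orbitRel.Quotient G P //
      ∃ x : P, orderOf x = p ^ a ∧ Quotient.mk'' x = ω} :=
    fun k => ⟨Quotient.mk'' (x ^ (1 + p * (k : ℕ))), x ^ (1 + p * (k : ℕ)), hord k, rfl⟩
  have hinj : Function.Injective f := by
    intro k l hkl
    have h : Quotient.mk'' (x ^ (1 + p * (k : ℕ)))
        = (Quotient.mk'' (x ^ (1 + p * (l : ℕ))) : MulAction.orbitRel.Quotient G P) :=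
      Subtype.ext_iff.mp hkl
    rw [Quotient.eq''] at h
    obtain ⟨g, hg⟩ := MulAction.mem_orbit_iff.mp (MulAction.orbitRel_apply.mp h)
    set m : ℕ := 1 + p * (l : ℕ) with hmdef
    set n : ℕ := 1 + p * (k : ℕ) with hndef
    -- hg : g • x ^ m = x ^ n
    have claim : ∀ j : ℕ, g ^ j • x ^ m ^ j = x ^ n ^ j := by
      intro j
      induction j with
      | zero => simp
      | succ j ih =>
        have e1 : x ^ m ^ (j + 1) = (x ^ m) ^ m ^ j := by
          rw [← pow_mul, ← pow_succ']
        rw [e1, pow_succ, mul_smul, smul_pow', hg, ← pow_mul, mul_comm,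
          pow_mul, smul_pow', ih, ← pow_mul, ← pow_succ]
    have hgN : g ^ N = 1 := by rw [hN]; exact pow_card_eq_one'
    have hxx : x ^ m ^ N = x ^ n ^ N := by
      have := claim N
      rwa [hgN, one_smul] at this
    have hmod : m ^ N ≡ n ^ N [MOD p ^ a] := by
      rw [← hx]
      exact pow_eq_pow_iff_modEq.mp hxx
    have hdvdZ : (p : ℤ) ^ a ∣ (m : ℤ) ^ N - (n : ℤ) ^ N := by
      have hd := (Nat.modEq_iff_dvd.mp hmod)
      push_cast at hd ⊢
      exact dvd_sub_comm.mp hd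
    have hm1 : ((m : ℤ) : ZMod p) = 1 := by
      rw [hmdef]; push_cast; simp [ZMod.natCast_self]
    have hn1 : ((n : ℤ) : ZMod p) = 1 := by
      rw [hndef]; push_cast; simp [ZMod.natCast_self]
    have key : (p : ℤ) ^ a ∣ (m : ℤ) - (n : ℤ) :=
      stmt_4_aux p a N hp hpN _ _ hm1 hn1 hdvdZ
    have hsub : (m : ℤ) - (n : ℤ) = (p : ℤ) * ((l : ℕ) - (k : ℕ) : ℤ) := by
      rw [hmdef, hndef]; push_cast; ring
    have hpa : (p : ℤ) ^ a = (p : ℤ) * (p : ℤ) ^ (a - 1) := by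
      rw [← pow_succ']
      congr 1
      omega
    rw [hsub, hpa] at key
    have hp0 : (p : ℤ) ≠ 0 := by exact_mod_cast hp.pos.ne'
    have key2 : (p : ℤ) ^ (a - 1) ∣ ((l : ℕ) : ℤ) - ((k : ℕ) : ℤ) :=
      (mul_dvd_mul_iff_left hp0).mp key
    have habs : |((l : ℕ) : ℤ) - ((k : ℕ) : ℤ)| < (p : ℤ) ^ (a - 1) := by
      have hk := k.isLt
      have hl := l.isLt
      rw [← Nat.cast_pow, abs_lt]
      omega
    have h0 : ((l : ℕ) : ℤ) - ((k : ℕ) : ℤ) = 0 :=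
      Int.eq_zero_of_abs_lt_dvd key2 habs
    have : (k : ℕ) = (l : ℕ) := by omega
    exact Fin.ext this
  calc p ^ (a - 1) = Nat.card (Fin (p ^ (a - 1))) := by simp
    _ ≤ _ := Nat.card_le_card_of_injective f hinj
end

section
/- Let G be a finite group of order divisible by a prime p, let P be a Sylow p-subgroup of G, and let a be a positive integer with p^a ≤ exp(Z(P)). Then the number of conjugacy classes of G consisting of elements g whose order has p-part exactly p^a is at least p^(a-1). -/
open Subgroup

private lemma aux_coprime_of_modeq_one {p k : ℕ} (hp : p.Prime) (hk : k ≡ 1 [MOD p]) :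
    Nat.Coprime k p := by
  rw [Nat.coprime_comm]
  rw [Nat.Prime.coprime_iff_not_dvd hp]
  intro h
  obtain ⟨m, rfl⟩ := h
  have h1 : p * m % p = 1 % p := hk
  rw [Nat.mul_mod_right, Nat.mod_eq_of_lt hp.one_lt] at h1
  omega

private lemma aux_modeq (p a k t : ℕ) (hp : p.Prime) (ha : 1 ≤ a)
    (hk1 : k ≡ 1 [MOD p]) (ht : Nat.Coprime p t)
    (hkt : k ^ t ≡ 1 [MOD p ^ a]) : k ≡ 1 [MOD p ^ a] := by
  haveI : Fact p.Prime := ⟨hp⟩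
  haveI : NeZero (p ^ a) := ⟨pow_ne_zero a hp.pos.ne'⟩
  have hco : Nat.Coprime k (p ^ a) :=
    Nat.Coprime.pow_right a (aux_coprime_of_modeq_one hp hk1)
  set K : (ZMod (p ^ a))ˣ := ZMod.unitOfCoprime k hco with hK
  have hdvd : p ∣ p ^ a := dvd_pow_self p (by omega)
  set ψ := ZMod.unitsMap hdvd with hψ
  have hker : K ∈ ψ.ker := by
    rw [MonoidHom.mem_ker]
    ext
    rw [hψ, ZMod.unitsMap_def]
    simp only [Units.coe_map, MonoidHom.coe_coe, hK, ZMod.coe_unitOfCoprime, Units.val_one]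
    rw [map_natCast]
    have := (ZMod.natCast_eq_natCast_iff k 1 p).mpr hk1
    simpa using this
  have hKt : K ^ t = 1 := by
    ext
    rw [Units.val_pow_eq_pow_val]
    simp only [hK, ZMod.coe_unitOfCoprime, Units.val_one]
    have := (ZMod.natCast_eq_natCast_iff (k ^ t) 1 (p ^ a)).mpr hkt
    push_cast at this
    simpa using this
  have hcard_units : Nat.card (ZMod (p ^ a))ˣ = p ^ (a - 1) * (p - 1) := by
    rw [Nat.card_eq_fintype_card, ZMod.card_units_eq_totient, Nat.totient_prime_pow hp (by omega)]
  have hquot : Nat.card ((ZMod (p ^ a))ˣ ⧸ ψ.ker) = p - 1 := by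
    rw [Nat.card_congr (QuotientGroup.quotientKerEquivOfSurjective ψ
      (ZMod.unitsMap_surjective hdvd)).toEquiv]
    rw [Nat.card_eq_fintype_card, ZMod.card_units_eq_totient, Nat.totient_prime hp]
  have htot := Subgroup.card_eq_card_quotient_mul_card_subgroup ψ.ker
  rw [hcard_units, hquot] at htot
  have hp1 : 0 < p - 1 := by have := hp.one_lt; omega
  have hkercard : Nat.card ψ.ker = p ^ (a - 1) := by
    have h2 : (p - 1) * Nat.card ψ.ker = (p - 1) * p ^ (a - 1) := by
      rw [← htot]; ring
    exact Nat.eq_of_mul_eq_mul_left hp1 h2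
  have h1 : orderOf K ∣ p ^ (a - 1) := by
    have hd : orderOf (⟨K, hker⟩ : ψ.ker) ∣ Nat.card ψ.ker := orderOf_dvd_natCard _
    rw [hkercard] at hd
    rwa [← orderOf_injective ψ.ker.subtype (Subgroup.subtype_injective _) ⟨K, hker⟩] at hd
  have h2 : orderOf K ∣ t := orderOf_dvd_of_pow_eq_one hKt
  have hco2 : Nat.Coprime (p ^ (a - 1)) t := Nat.Coprime.pow_left (a - 1) ht
  have h3 : orderOf K ∣ Nat.gcd (p ^ (a - 1)) t := Nat.dvd_gcd h1 h2
  rw [hco2] at h3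
  have hK1 : K = 1 := orderOf_eq_one_iff.mp (Nat.dvd_one.mp h3)
  have hv : ((k : ZMod (p ^ a))) = ((1 : ℕ) : ZMod (p ^ a)) := by
    have : ((K : ZMod (p ^ a))) = 1 := by rw [hK1, Units.val_one]
    rw [hK, ZMod.coe_unitOfCoprime] at this
    simpa using this
  exact (ZMod.natCast_eq_natCast_iff k 1 (p ^ a)).mp hv

private lemma aux_fusion {G : Type*} [Group G] [Fintype G] {p a : ℕ} [Fact p.Prime]
    (ha : 1 ≤ a) (P : Sylow p G) {z : G}
    (hz : z ∈ Subgroup.centralizer (P : Set G))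
    (hord : orderOf z = p ^ a) {k : ℕ} (hk : k ≡ 1 [MOD p])
    (hconj : IsConj z (z ^ k)) : k ≡ 1 [MOD p ^ a] := by
  have hp : p.Prime := Fact.out
  obtain ⟨c, hc⟩ := isConj_iff.mp hconj
  have hg : (c⁻¹)⁻¹ * z * c⁻¹ ∈ Subgroup.centralizer (P : Set G) := by
    have he : (c⁻¹)⁻¹ * z * c⁻¹ = z ^ k := by rw [inv_inv]; exact hc
    rw [he]; exact pow_mem hz k
  obtain ⟨n, hn, heq⟩ :=
    Sylow.conj_eq_normalizer_conj_of_mem_centralizer P z c⁻¹ hz hg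
  have hw : n⁻¹ ∈ Subgroup.normalizer (P : Set G) := inv_mem hn
  have hwz : MulAut.conj n⁻¹ z = z ^ k := by
    have h1 : n⁻¹ * z * n = z ^ k := by
      rw [← heq, inv_inv]; exact hc
    rw [MulAut.conj_apply, inv_inv]; exact h1
  have key : ∀ m : ℕ, MulAut.conj (n⁻¹ ^ m) z = z ^ k ^ m := by
    intro m
    induction m with
    | zero => simp
    | succ m ih =>
      rw [pow_succ, map_mul, MulAut.mul_apply, hwz, map_pow, ih, ← pow_mul, ← pow_succ]
  have hu : orderOf n⁻¹ ≠ 0 := (orderOf_pos _).ne'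
  set u := orderOf n⁻¹ with hudef
  set s := u.factorization p with hsdef
  set t := u / p ^ s with htdef
  have htu : t ∣ u := Nat.ordCompl_dvd u p
  have hpt : Nat.Coprime p t := Nat.coprime_ordCompl hp hu
  have hordwt : orderOf (n⁻¹ ^ t) = p ^ s := by
    rw [orderOf_pow, ← hudef, Nat.gcd_eq_right htu, htdef,
      Nat.div_div_self (Nat.ordProj_dvd u p) hu]
  have hpg : IsPGroup p (Subgroup.zpowers (n⁻¹ ^ t)) :=
    IsPGroup.of_card (by rw [Nat.card_zpowers, hordwt])
  have hmem : n⁻¹ ^ t ∈ Subgroup.zpowers (n⁻¹ ^ t) ⊓ Subgroup.normalizer (P : Set G) :=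
    ⟨Subgroup.mem_zpowers _, pow_mem hw t⟩
  rw [hpg.inf_normalizer_sylow P] at hmem
  have hwtP : n⁻¹ ^ t ∈ (P : Subgroup G) := hmem.2
  have hcomm : n⁻¹ ^ t * z = z * n⁻¹ ^ t :=
    (Subgroup.mem_centralizer_iff.mp hz) _ hwtP
  have hfix : MulAut.conj (n⁻¹ ^ t) z = z := by
    rw [MulAut.conj_apply, hcomm, mul_assoc, mul_inv_cancel, mul_one]
  have hzk : z ^ k ^ t = z ^ 1 := by
    rw [← key t, hfix, pow_one]
  have hmod : k ^ t ≡ 1 [MOD p ^ a] := by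
    have := pow_eq_pow_iff_modEq.mp hzk
    rwa [hord] at this
  exact aux_modeq p a k t hp ha hk hpt hmod

theorem stmt_5 (p a : ℕ) [Fact p.Prime] (ha : 1 ≤ a)
    (G : Type*) [Group G] [Fintype G] (hdvd : p ∣ Nat.card G)
    (P : Sylow p G)
    (hexp : p ^ a ≤ Monoid.exponent (Subgroup.center ↥(P : Subgroup G))) :
    p ^ (a - 1) ≤ Nat.card {C : ConjClasses G //
      ∃ g : G, ConjClasses.mk g = C ∧ (orderOf g).factorization p = a} := by
  have hp : p.Prime := Fact.out
  haveI : NeZero (p ^ a) := ⟨pow_ne_zero a hp.pos.ne'⟩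
  haveI : NeZero p := ⟨hp.pos.ne'⟩
  set Pc := (P : Subgroup G) with hPc
  -- find an element of Z(P) of order exactly p ^ a
  obtain ⟨z0, hz0⟩ := open scoped IsMulCommutative in Monoid.exists_orderOf_eq_exponent
    (Monoid.ExponentExists.of_finite (G := ↥(Subgroup.center ↥Pc)))
  have horder0 : orderOf ((z0 : ↥Pc) : G) = orderOf z0 := by
    have e1 : orderOf ((z0 : ↥Pc) : G) = orderOf (z0 : ↥Pc) :=
      orderOf_injective Pc.subtype (Subgroup.subtype_injective _) _
    have e2 : orderOf (z0 : ↥Pc) = orderOf z0 :=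
      orderOf_injective (Subgroup.center ↥Pc).subtype (Subgroup.subtype_injective _) _
    rw [e1, e2]
  obtain ⟨b, hb⟩ := IsPGroup.iff_orderOf.mp P.2 (z0 : ↥Pc)
  have hb' : orderOf ((z0 : ↥Pc) : G) = p ^ b := by
    have e1 : orderOf ((z0 : ↥Pc) : G) = orderOf (z0 : ↥Pc) :=
      orderOf_injective Pc.subtype (Subgroup.subtype_injective _) _
    rw [e1]; exact hb
  have hab : a ≤ b := by
    have h1 : p ^ a ≤ p ^ b := by
      rw [← hb', horder0, hz0]; exact hexp
    exact (Nat.pow_le_pow_iff_right hp.one_lt).mp h1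
  set z := ((z0 : ↥Pc) : G) ^ p ^ (b - a) with hzdef
  have hordz : orderOf z = p ^ a := by
    rw [hzdef, orderOf_pow, hb', Nat.gcd_eq_right (pow_dvd_pow p (by omega)),
      Nat.pow_div (by omega) hp.pos, show b - (b - a) = a by omega]
  have hzc : z ∈ Subgroup.centralizer (Pc : Set G) := by
    apply pow_mem
    rw [Subgroup.mem_centralizer_iff]
    intro h hh
    have hcen := (Subgroup.mem_center_iff.mp (SetLike.coe_mem z0)) ⟨h, hh⟩
    have := congrArg (fun x : ↥Pc => (x : G)) hcen
    simpa using this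
  -- build the injection
  have hdvd' : p ∣ p ^ a := dvd_pow_self p (by omega)
  have hmemT : ∀ u : (ZMod (p ^ a))ˣ,
      (orderOf (z ^ ((u : ZMod (p ^ a)).val))).factorization p = a := by
    intro u
    have hco := ZMod.val_coe_unit_coprime u
    rw [orderOf_pow, hordz, (Nat.Coprime.gcd_eq_one hco.symm), Nat.div_one,
      hp.factorization_pow, Finsupp.single_eq_same]
  set T := {C : ConjClasses G //
      ∃ g : G, ConjClasses.mk g = C ∧ (orderOf g).factorization p = a} with hT
  set F : (ZMod (p ^ a))ˣ → T × (ZMod p)ˣ := fun u =>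
    (⟨ConjClasses.mk (z ^ ((u : ZMod (p ^ a)).val)),
      ⟨z ^ ((u : ZMod (p ^ a)).val), rfl, hmemT u⟩⟩, ZMod.unitsMap hdvd' u) with hF
  have hinj : Function.Injective F := by
    intro u v huv
    rw [hF, Prod.mk.injEq, Subtype.mk.injEq] at huv
    obtain ⟨h1, h2⟩ := huv
    set i := (u : ZMod (p ^ a)).val with hidef
    set j := (v : ZMod (p ^ a)).val with hjdef
    set i' := ((u⁻¹ : (ZMod (p ^ a))ˣ) : ZMod (p ^ a)).val with hi'def
    have hii' : i * i' ≡ 1 [MOD p ^ a] := by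
      have hv : ((i * i' : ℕ) : ZMod (p ^ a)) = ((1 : ℕ) : ZMod (p ^ a)) := by
        push_cast
        rw [hidef, hi'def, ZMod.natCast_val, ZMod.natCast_val, ZMod.cast_id, ZMod.cast_id,
          ← Units.val_mul, mul_inv_cancel, Units.val_one]
      exact (ZMod.natCast_eq_natCast_iff _ _ _).mp hv
    have hij_p : i ≡ j [MOD p] := by
      have hv : ((i : ℕ) : ZMod p) = ((j : ℕ) : ZMod p) := by
        have h2' := congrArg (Units.val) h2
        rw [ZMod.unitsMap_def] at h2'
        simp only [Units.coe_map, MonoidHom.coe_coe] at h2'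
        rwa [ZMod.castHom_apply, ZMod.castHom_apply, ← ZMod.natCast_val, ← ZMod.natCast_val]
          at h2'
      exact (ZMod.natCast_eq_natCast_iff _ _ _).mp hv
    obtain ⟨c, hc⟩ := isConj_iff.mp ((ConjClasses.mk_eq_mk_iff_isConj).mp h1)
    have hzii' : z ^ (i * i') = z ^ 1 := by
      apply pow_eq_pow_iff_modEq.mpr
      rwa [hordz]
    have e1 : c * z * c⁻¹ = z ^ (j * i') := by
      conv_lhs => rw [show z = z ^ (i * i') by rw [hzii', pow_one]]
      rw [pow_mul, ← conj_pow, hc, ← pow_mul]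
    have hk1 : j * i' ≡ 1 [MOD p] := by
      calc j * i' ≡ i * i' [MOD p] := Nat.ModEq.mul_right i' hij_p.symm
        _ ≡ 1 [MOD p] := Nat.ModEq.of_dvd hdvd' hii'
    have hfus : j * i' ≡ 1 [MOD p ^ a] :=
      aux_fusion ha P hzc hordz hk1 (isConj_iff.mpr ⟨c, e1⟩)
    have hji : j ≡ i [MOD p ^ a] := by
      calc j = j * 1 := (mul_one j).symm
        _ ≡ j * (i * i') [MOD p ^ a] := (Nat.ModEq.mul_left j hii').symm
        _ = i * (j * i') := by ring
        _ ≡ i * 1 [MOD p ^ a] := Nat.ModEq.mul_left i hfus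
        _ = i := mul_one i
    have hij : i = j := by
      have hm : j % p ^ a = i % p ^ a := hji
      rw [Nat.mod_eq_of_lt (ZMod.val_lt _), Nat.mod_eq_of_lt (ZMod.val_lt _)] at hm
      exact hm.symm
    exact Units.ext (ZMod.val_injective _ hij)
  haveI : Finite (ConjClasses G) := Quotient.finite _
  have hle := Nat.card_le_card_of_injective F hinj
  rw [Nat.card_prod] at hle
  have hcu : Nat.card (ZMod (p ^ a))ˣ = p ^ (a - 1) * (p - 1) := by
    rw [Nat.card_eq_fintype_card, ZMod.card_units_eq_totient, Nat.totient_prime_pow hp (by omega)]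
  have hcp : Nat.card (ZMod p)ˣ = p - 1 := by
    rw [Nat.card_eq_fintype_card, ZMod.card_units_eq_totient, Nat.totient_prime hp]
  rw [hcu, hcp] at hle
  have hp1 : 0 < p - 1 := by have := hp.one_lt; omega
  exact Nat.le_of_mul_le_mul_right hle hp1
end

section
/- Let p be a prime, P a cyclic group of order p^b, and A a group of automorphisms of P of order p - 1 acting on P, with G = A ⋉ P the semidirect product. Then for every integer a with 1 ≤ a ≤ b, the number of conjugacy classes of G consisting of elements whose order has p-part exactly p^a equals p^(a-1). -/
open SemidirectProduct Multiplicative Finset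

section Aux

variable {n : ℕ} [NeZero n]

/-- The scalar associated to an automorphism of `Multiplicative (ZMod n)`. -/
private def chr (α : MulAut (Multiplicative (ZMod n))) : ZMod n :=
  (α (ofAdd 1)).toAdd

private lemma chr_apply (α : MulAut (Multiplicative (ZMod n)))
    (x : Multiplicative (ZMod n)) : (α x).toAdd = chr α * x.toAdd := by
  have hx : (ofAdd (1 : ZMod n)) ^ (x.toAdd).val = x := by
    apply Multiplicative.toAdd.injective
    simp [toAdd_pow, nsmul_eq_mul, ZMod.natCast_zmod_val]
  calc (α x).toAdd = (α ((ofAdd (1 : ZMod n)) ^ (x.toAdd).val)).toAdd := by rw [hx]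
    _ = ((x.toAdd).val : ZMod n) * chr α := by
        rw [map_pow, toAdd_pow, nsmul_eq_mul]; rfl
    _ = chr α * x.toAdd := by rw [ZMod.natCast_zmod_val, mul_comm]

private lemma chr_one : chr (1 : MulAut (Multiplicative (ZMod n))) = 1 := by
  simp [chr]

private lemma chr_mul (α β : MulAut (Multiplicative (ZMod n))) :
    chr (α * β) = chr α * chr β := by
  have := chr_apply α (β (ofAdd 1))
  simpa [chr, MulAut.mul_apply] using this

private lemma chr_pow (α : MulAut (Multiplicative (ZMod n))) (k : ℕ) :
    chr (α ^ k) = chr α ^ k := by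
  induction k with
  | zero => simpa using chr_one
  | succ k ih => rw [pow_succ, pow_succ, chr_mul, ih]

private lemma chr_eq_one {α : MulAut (Multiplicative (ZMod n))} (h : chr α = 1) :
    α = 1 := by
  ext x
  apply Multiplicative.toAdd.injective
  rw [chr_apply, h, one_mul]
  rfl

end Aux

section UnitLemma

private lemma cast_eq_zero_of_not_isUnit {p b : ℕ} (hp : p.Prime) (hb : 1 ≤ b)
    {x : ZMod (p ^ b)} (hx : ¬ IsUnit x) :
    ZMod.castHom (dvd_pow_self p (Nat.one_le_iff_ne_zero.mp hb)) (ZMod p) x = 0 := by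
  haveI : NeZero (p ^ b) := ⟨pow_ne_zero _ hp.pos.ne'⟩
  by_contra h0
  apply hx
  have hcast : ZMod.castHom (dvd_pow_self p (Nat.one_le_iff_ne_zero.mp hb)) (ZMod p) x
      = ((x.val : ℕ) : ZMod p) := by
    rw [ZMod.castHom_apply, ZMod.natCast_val]
  have hndvd : ¬ p ∣ x.val := by
    intro hdvd
    apply h0
    rw [hcast, ZMod.natCast_eq_zero_iff]
    exact hdvd
  rw [← ZMod.natCast_zmod_val x]
  exact (ZMod.isUnit_iff_coprime _ _).mpr
    (Nat.Coprime.pow_right _ (Nat.coprime_comm.mp (hp.coprime_iff_not_dvd.mpr hndvd)))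

private lemma unit_sub_one {p b : ℕ} (hp : p.Prime) (hb : 1 ≤ b) {u : ZMod (p ^ b)}
    (hpow : u ^ (p - 1) = 1) (hne : u ≠ 1) : IsUnit (u - 1) := by
  haveI : NeZero (p ^ b) := ⟨pow_ne_zero _ hp.pos.ne'⟩
  haveI : Fact p.Prime := ⟨hp⟩
  by_contra hcon
  apply hne
  have hu : IsUnit u := by
    refine IsUnit.of_mul_eq_one (u ^ (p - 2)) ?_
    have h2p := hp.two_le
    have : u * u ^ (p - 2) = u ^ (p - 2 + 1) := by rw [pow_succ']
    rw [this, show p - 2 + 1 = p - 1 by omega, hpow]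
  obtain ⟨w, hw⟩ := hu
  have hw1 : w ^ (p - 1) = 1 := by
    apply Units.ext
    rw [Units.val_pow_eq_pow_val, hw, hpow, Units.val_one]
  set f := ZMod.unitsMap (dvd_pow_self p (Nat.one_le_iff_ne_zero.mp hb)) with hf
  have hfw : f w = 1 := by
    apply Units.ext
    have h1 : (f w : ZMod p)
        = ZMod.castHom (dvd_pow_self p (Nat.one_le_iff_ne_zero.mp hb)) (ZMod p) u := by
      rw [← hw]; rfl
    have h2 : ZMod.castHom (dvd_pow_self p (Nat.one_le_iff_ne_zero.mp hb)) (ZMod p) (u - 1)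
        = 0 := cast_eq_zero_of_not_isUnit hp hb hcon
    rw [map_sub, map_one] at h2
    rw [h1, Units.val_one]
    exact sub_eq_zero.mp h2
  have hker : w ∈ f.ker := MonoidHom.mem_ker.mpr hfw
  have hcardker : Nat.card f.ker = p ^ (b - 1) := by
    have h1 : Nat.card (ZMod (p ^ b))ˣ
        = Nat.card ((ZMod (p ^ b))ˣ ⧸ f.ker) * Nat.card f.ker :=
      Subgroup.card_eq_card_quotient_mul_card_subgroup _
    have h2 : Nat.card ((ZMod (p ^ b))ˣ ⧸ f.ker) = Nat.card (ZMod p)ˣ :=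
      Nat.card_congr (QuotientGroup.quotientKerEquivOfSurjective f
        (ZMod.unitsMap_surjective _)).toEquiv
    have h3 : Nat.card (ZMod (p ^ b))ˣ = p ^ (b - 1) * (p - 1) := by
      rw [Nat.card_eq_fintype_card, ZMod.card_units_eq_totient,
        Nat.totient_prime_pow hp (Nat.lt_of_lt_of_le Nat.zero_lt_one hb)]
    have h4 : Nat.card (ZMod p)ˣ = p - 1 := by
      rw [Nat.card_eq_fintype_card, ZMod.card_units_eq_totient, Nat.totient_prime hp]
    rw [h2, h3, h4] at h1
    have hppos : 0 < p - 1 := by have := hp.two_le; omega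
    exact (Nat.eq_of_mul_eq_mul_left hppos (by rw [← h1]; ring)).symm
  have hdvd1 : orderOf w ∣ p - 1 := orderOf_dvd_of_pow_eq_one hw1
  have hdvd2 : orderOf w ∣ p ^ (b - 1) := hcardker ▸ Subgroup.orderOf_dvd_natCard f.ker hker
  have hcop : Nat.Coprime (p - 1) (p ^ (b - 1)) := by
    apply Nat.Coprime.pow_right
    apply Nat.coprime_comm.mp
    apply hp.coprime_iff_not_dvd.mpr
    intro hdvd
    have h1 : 0 < p - 1 := by have := hp.two_le; omega
    have := Nat.le_of_dvd h1 hdvd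
    omega
  have hone : orderOf w = 1 := Nat.dvd_one.mp (hcop ▸ Nat.dvd_gcd hdvd1 hdvd2)
  have : w = 1 := orderOf_eq_one_iff.mp hone
  rw [← hw, this, Units.val_one]

end UnitLemma


section SDP

variable {p b : ℕ} (A : Subgroup (MulAut (Multiplicative (ZMod (p ^ b))))) [NeZero (p ^ b)]

private lemma pow_left_toAdd (g : Multiplicative (ZMod (p ^ b)) ⋊[A.subtype] A) (k : ℕ) :
    ((g ^ k).left).toAdd
      = (∑ i ∈ Finset.range k, chr (A.subtype g.right) ^ i) * g.left.toAdd := by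
  induction k with
  | zero => simp [one_left]
  | succ k ih =>
    rw [pow_succ', mul_left, toAdd_mul, chr_apply, ih, geom_sum_succ]
    ring

private lemma order_dvd_of_right_ne_one (hp : p.Prime) (hb : 1 ≤ b)
    (hA : Nat.card A = p - 1)
    (g : Multiplicative (ZMod (p ^ b)) ⋊[A.subtype] A) (h : g.right ≠ 1) :
    orderOf g ∣ p - 1 := by
  set d := orderOf g.right with hd
  have hdvd : d ∣ p - 1 := hA ▸ orderOf_dvd_natCard g.right
  set u := chr (A.subtype g.right) with hu
  have hupow : u ^ d = 1 := by
    rw [hu, ← chr_pow, ← map_pow, pow_orderOf_eq_one, map_one, chr_one]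
  have hune : u ≠ 1 := by
    intro h1
    exact h (Subgroup.subtype_injective A ((chr_eq_one h1).trans (map_one A.subtype).symm))
  have hup : u ^ (p - 1) = 1 := by
    obtain ⟨k, hk⟩ := hdvd
    rw [hk, pow_mul, hupow, one_pow]
  have hunit : IsUnit (u - 1) := unit_sub_one hp hb hup hune
  have hsum0 : (∑ i ∈ Finset.range d, u ^ i) = 0 := by
    refine hunit.mul_right_cancel ?_
    rw [geom_sum_mul, hupow, sub_self, zero_mul]
  have hgd : g ^ d = 1 := by
    have hleft : ((g ^ d).left).toAdd = (0 : ZMod (p ^ b)) := by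
      rw [pow_left_toAdd, ← hu, hsum0, zero_mul]
    have hright : (g ^ d).right = 1 := by
      have h1 : (g ^ d).right = g.right ^ d := by
        have := map_pow (rightHom : _ ⋊[A.subtype] A →* A) g d
        simpa [rightHom_eq_right] using this
      rw [h1, pow_orderOf_eq_one]
    refine SemidirectProduct.ext ?_ ?_
    · exact Multiplicative.toAdd.injective (by simpa using hleft)
    · simpa using hright
  exact dvd_trans (orderOf_dvd_of_pow_eq_one hgd) hdvd

private lemma good_form (hp : p.Prime) (hb : 1 ≤ b) (hA : Nat.card A = p - 1)
    {a : ℕ} (ha1 : 1 ≤ a) (g : Multiplicative (ZMod (p ^ b)) ⋊[A.subtype] A)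
    (hfact : (orderOf g).factorization p = a) :
    ∃ x : Multiplicative (ZMod (p ^ b)), g = inl x ∧ orderOf x = p ^ a := by
  have h2p := hp.two_le
  have hright : g.right = 1 := by
    by_contra hne
    have hdvd := order_dvd_of_right_ne_one A hp hb hA g hne
    have hnd : ¬ p ∣ orderOf g := by
      intro hpd
      have := Nat.le_of_dvd (by omega) (hpd.trans hdvd)
      omega
    rw [Nat.factorization_eq_zero_of_not_dvd hnd] at hfact
    omega
  have hgeq : g = inl g.left := by
    conv_lhs => rw [← inl_left_mul_inr_right g]
    rw [hright, map_one, mul_one]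
  refine ⟨g.left, hgeq, ?_⟩
  have hog : orderOf g = orderOf g.left := by
    conv_lhs => rw [hgeq]
    exact orderOf_injective inl inl_injective g.left
  have hdvd : orderOf g.left ∣ p ^ b := by
    have := orderOf_dvd_natCard g.left
    rwa [Nat.card_eq_fintype_card, Fintype.card_multiplicative, ZMod.card] at this
  obtain ⟨k, _, hkeq⟩ := (Nat.dvd_prime_pow hp).mp hdvd
  rw [hog, hkeq] at hfact
  rw [hp.factorization_pow, Finsupp.single_eq_same] at hfact
  rw [hkeq, hfact]

private lemma conj_iff (x y : Multiplicative (ZMod (p ^ b))) :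
    ConjClasses.mk (inl x : Multiplicative (ZMod (p ^ b)) ⋊[A.subtype] A)
      = ConjClasses.mk (inl y) ↔ ∃ β : A, A.subtype β x = y := by
  rw [ConjClasses.mk_eq_mk_iff_isConj, isConj_iff]
  constructor
  · rintro ⟨h, hc⟩
    have key : h * inl x * h⁻¹ = inl (A.subtype h.right x) := by
      calc h * inl x * h⁻¹
          = inl h.left * (inr h.right * inl x * (inr h.right)⁻¹) * (inl h.left)⁻¹ := by
            conv_lhs => rw [← inl_left_mul_inr_right h]
            group
        _ = inl h.left * inl (A.subtype h.right x) * inl h.left⁻¹ := by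
            rw [← map_inv, ← inl_aut, ← map_inv]
        _ = inl (h.left * A.subtype h.right x * h.left⁻¹) := by rw [← map_mul, ← map_mul]
        _ = inl (A.subtype h.right x) := by
            rw [mul_comm h.left, mul_assoc, mul_inv_cancel, mul_one]
    exact ⟨h.right, inl_injective (key.symm.trans hc)⟩
  · rintro ⟨β, hβ⟩
    exact ⟨inr β, by rw [← map_inv, ← inl_aut, hβ]⟩

private lemma free_action (hp : p.Prime) (hb : 1 ≤ b) (hA : Nat.card A = p - 1)
    {x : Multiplicative (ZMod (p ^ b))} (hx : x ≠ 1) {β γ : A}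
    (h : A.subtype β x = A.subtype γ x) : β = γ := by
  by_contra hne
  set δ := γ⁻¹ * β with hδ
  have hδne : δ ≠ 1 := by
    intro h1
    exact hne (inv_mul_eq_one.mp h1).symm
  have hδx : A.subtype δ x = x := by
    rw [hδ, map_mul, MulAut.mul_apply, h, ← MulAut.mul_apply, ← map_mul,
      inv_mul_cancel, map_one]
    rfl
  have hune : chr (A.subtype δ) ≠ 1 := by
    intro h1
    exact hδne (Subgroup.subtype_injective A ((chr_eq_one h1).trans (map_one A.subtype).symm))
  have hupow : chr (A.subtype δ) ^ (p - 1) = 1 := by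
    rw [← chr_pow, ← map_pow]
    have h1 : δ ^ (p - 1) = 1 := by
      rw [← hA]
      exact pow_card_eq_one'
    rw [h1, map_one, chr_one]
  have hunit := unit_sub_one hp hb hupow hune
  have hz : (chr (A.subtype δ) - 1) * x.toAdd = (chr (A.subtype δ) - 1) * 0 := by
    have h1 := chr_apply (A.subtype δ) x
    rw [hδx] at h1
    rw [sub_mul, one_mul, ← h1, sub_self, mul_zero]
  have hx0 : x.toAdd = 0 := hunit.mul_left_cancel hz
  exact hx (Multiplicative.toAdd.injective (by simpa using hx0))

end SDP

theorem stmt_6 (p b : ℕ) (hp : p.Prime) (hb : 1 ≤ b)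
    (A : Subgroup (MulAut (Multiplicative (ZMod (p ^ b)))))
    (hA : Nat.card A = p - 1)
    (a : ℕ) (ha1 : 1 ≤ a) (hab : a ≤ b) :
    Nat.card {C : ConjClasses (Multiplicative (ZMod (p ^ b)) ⋊[A.subtype] A) //
      ∃ g, ConjClasses.mk g = C ∧ (orderOf g).factorization p = a} = p ^ (a - 1) := by
  haveI : NeZero (p ^ b) := ⟨pow_ne_zero _ hp.pos.ne'⟩
  classical
  have h2p := hp.two_le
  set T := {C : ConjClasses (Multiplicative (ZMod (p ^ b)) ⋊[A.subtype] A) //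
      ∃ g, ConjClasses.mk g = C ∧ (orderOf g).factorization p = a} with hTdef
  set S := {x : Multiplicative (ZMod (p ^ b)) // orderOf x = p ^ a} with hSdef
  have hmem : ∀ x : Multiplicative (ZMod (p ^ b)), orderOf x = p ^ a →
      (orderOf (inl x : Multiplicative (ZMod (p ^ b)) ⋊[A.subtype] A)).factorization p = a := by
    intro x hx
    rw [orderOf_injective inl inl_injective x, hx, hp.factorization_pow,
      Finsupp.single_eq_same]
  set q : S → T := fun x => ⟨ConjClasses.mk (inl x.1), inl x.1, rfl, hmem x.1 x.2⟩ with hqdef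
  have hfiber : ∀ t : T, Nonempty ({s : S // q s = t} ≃ A) := by
    intro t
    obtain ⟨g, hg, hfact⟩ := t.2
    obtain ⟨x₀, rfl, hx₀⟩ := good_form A hp hb hA ha1 g hfact
    have hx₀ne : x₀ ≠ 1 := by
      intro h1
      rw [h1, orderOf_one] at hx₀
      have := Nat.one_lt_pow (Nat.one_le_iff_ne_zero.mp ha1) h2p
      omega
    have hord : ∀ β : A, orderOf (A.subtype β x₀) = p ^ a := fun β => by
      rw [show orderOf (A.subtype β x₀) = orderOf x₀ from
        orderOf_injective (A.subtype β).toMonoidHom (A.subtype β).injective x₀, hx₀]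
    refine ⟨(Equiv.ofBijective (fun β : A =>
      (⟨⟨A.subtype β x₀, hord β⟩, Subtype.ext (((conj_iff A _ _).mpr
        ⟨β⁻¹, by simp [← MulAut.mul_apply, ← map_mul]⟩).trans hg)⟩ :
        {s : S // q s = t})) ⟨?_, ?_⟩).symm⟩
    · intro β γ hβγ
      have h1 : A.subtype β x₀ = A.subtype γ x₀ := by
        have := congrArg (fun s => s.1.1) hβγ
        simpa using this
      exact free_action A hp hb hA hx₀ne h1
    · rintro ⟨⟨x, hx⟩, hqx⟩
      have h1 : ConjClasses.mk (inl x : Multiplicative (ZMod (p ^ b)) ⋊[A.subtype] A)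
          = ConjClasses.mk (inl x₀) := by
        have := congrArg Subtype.val hqx
        simpa [hqdef, ← hg] using this
      obtain ⟨β, hβ⟩ := (conj_iff A _ _).mp h1
      refine ⟨β⁻¹, ?_⟩
      refine Subtype.ext (Subtype.ext ?_)
      show A.subtype β⁻¹ x₀ = x
      rw [← hβ]
      simp [← MulAut.mul_apply, ← map_mul]
  have hcardS : Nat.card S = p ^ (a - 1) * (p - 1) := by
    rw [hSdef, Nat.card_eq_fintype_card, Fintype.card_subtype]
    have hd : (p : ℕ) ^ a ∣ Fintype.card (Multiplicative (ZMod (p ^ b))) := by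
      rw [Fintype.card_multiplicative, ZMod.card]
      exact pow_dvd_pow p hab
    rw [IsCyclic.card_orderOf_eq_totient hd, Nat.totient_prime_pow hp
      (Nat.lt_of_lt_of_le Nat.zero_lt_one ha1)]
  have hequiv : Nat.card S = Nat.card T * (p - 1) := by
    have e1 : S ≃ (Σ t : T, {s : S // q s = t}) := (Equiv.sigmaFiberEquiv q).symm
    have e2 : (Σ t : T, {s : S // q s = t}) ≃ (Σ _ : T, A) :=
      Equiv.sigmaCongrRight fun t => Classical.choice (hfiber t)
    have e3 : (Σ _ : T, A) ≃ T × A := Equiv.sigmaEquivProd T A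
    rw [Nat.card_congr (e1.trans (e2.trans e3)), Nat.card_prod, hA]
  have hppos : 0 < p - 1 := by omega
  exact Nat.eq_of_mul_eq_mul_right hppos (hequiv.symm.trans hcardS)
end

section
/- Let p be a prime, P a finite abelian p-group, and H a finite group of order coprime to p acting on P by automorphisms. In the semidirect product G = H ⋉ P, two elements of P are conjugate in G if and only if they lie in the same H-orbit; consequently the number of conjugacy classes of G contained in P equals the number of H-orbits on P. -/
theorem stmt_8 (p : ℕ) (hp : p.Prime)
    (P : Type*) [CommGroup P] [Fintype P] (hP : IsPGroup p P)
    (H : Type*) [Group H] [Fintype H] (hH : Nat.Coprime (Nat.card H) p)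
    (φ : H →* MulAut P) :
    (∀ x y : P, IsConj (SemidirectProduct.inl x : P ⋊[φ] H) (SemidirectProduct.inl y) ↔
        ∃ h : H, φ h x = y) ∧
    (letI : MulAction H P := MulAction.compHom P φ
     Nat.card {C : ConjClasses (P ⋊[φ] H) //
        ∃ x : P, ConjClasses.mk (SemidirectProduct.inl x : P ⋊[φ] H) = C} =
      Nat.card (MulAction.orbitRel.Quotient H P)) := by
  have key : ∀ (g : P ⋊[φ] H) (x : P),
      g * SemidirectProduct.inl x * g⁻¹ = SemidirectProduct.inl (φ g.right x) := by
    intro g x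
    ext <;> simp [mul_comm, mul_assoc, mul_left_comm]
  have main : ∀ x y : P,
      IsConj (SemidirectProduct.inl x : P ⋊[φ] H) (SemidirectProduct.inl y) ↔
        ∃ h : H, φ h x = y := by
    intro x y
    rw [isConj_iff]
    constructor
    · rintro ⟨g, hg⟩
      exact ⟨g.right, SemidirectProduct.inl_injective ((key g x).symm.trans hg)⟩
    · rintro ⟨h, hh⟩
      exact ⟨SemidirectProduct.inr h, by rw [key]; simp [hh]⟩
  refine ⟨main, ?_⟩
  letI : MulAction H P := MulAction.compHom P φ
  have hsmul : ∀ (h : H) (x : P), h • x = φ h x := fun _ _ => rfl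
  symm
  apply Nat.card_eq_of_bijective
    (Quotient.lift (fun x : P =>
      (⟨ConjClasses.mk (SemidirectProduct.inl x : P ⋊[φ] H), x, rfl⟩ :
        {C : ConjClasses (P ⋊[φ] H) //
          ∃ x : P, ConjClasses.mk (SemidirectProduct.inl x : P ⋊[φ] H) = C}))
      (fun x y hxy => by
        obtain ⟨h, hh⟩ := hxy
        refine Subtype.ext ?_
        rw [ConjClasses.mk_eq_mk_iff_isConj]
        refine (main x y).mpr ⟨h⁻¹, ?_⟩
        have hh' : φ h y = x := hh
        rw [← hh']
        simp))
  constructor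
  · rintro ⟨x⟩ ⟨y⟩ hxy
    obtain ⟨h, hh⟩ := (main x y).mp
      (ConjClasses.mk_eq_mk_iff_isConj.mp (Subtype.ext_iff.mp hxy))
    exact Quotient.sound ⟨h⁻¹, show φ h⁻¹ y = x by rw [← hh]; simp⟩
  · rintro ⟨C, x, rfl⟩
    exact ⟨Quotient.mk _ x, rfl⟩
end

section
/- Let G be a finite group, p a prime, and P a Sylow p-subgroup of G. If two elements x, y of the center Z(P) are conjugate in G, then they are conjugate in the normalizer N_G(P). -/
theorem stmt_9 (p : ℕ) [Fact p.Prime]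
    (G : Type*) [Group G] [Fintype G] (P : Sylow p G)
    (x y : ↥(P : Subgroup G))
    (hx : x ∈ Subgroup.center ↥(P : Subgroup G))
    (hy : y ∈ Subgroup.center ↥(P : Subgroup G))
    (h : IsConj (x : G) (y : G)) :
    ∃ n ∈ Subgroup.normalizer ((P : Subgroup G) : Set G), n * (x : G) * n⁻¹ = (y : G) := by
  obtain ⟨c, hc⟩ := isConj_iff.mp h
  have hg : c⁻¹⁻¹ * (x : G) * c⁻¹ = (y : G) := by rw [inv_inv]; exact hc
  have hcx : (x : G) ∈ Subgroup.centralizer ((P : Subgroup G) : Set G) := by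
    intro g hgm
    exact congrArg Subtype.val ((Subgroup.mem_center_iff.mp hx) ⟨g, hgm⟩)
  have hcy : c⁻¹⁻¹ * (x : G) * c⁻¹ ∈ Subgroup.centralizer ((P : Subgroup G) : Set G) := by
    rw [hg]
    intro g hgm
    exact congrArg Subtype.val ((Subgroup.mem_center_iff.mp hy) ⟨g, hgm⟩)
  obtain ⟨n, hn, heq⟩ :=
    P.conj_eq_normalizer_conj_of_mem_centralizer (x : G) c⁻¹ hcx hcy
  exact ⟨n⁻¹, (Subgroup.normalizer ((P : Subgroup G) : Set G)).inv_mem hn, by rw [inv_inv, ← hg, heq]⟩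
end

section
/- Let p be a prime, P a finite abelian p-group, and G a group of order coprime to p acting faithfully on P by automorphisms. Then G acts faithfully on Ω_1(P), the subgroup of elements of order dividing p. -/
theorem stmt_11 (p : ℕ) (hp : p.Prime)
    (P : Type*) [CommGroup P] [Fintype P] (hP : IsPGroup p P)
    (G : Type*) [Group G] [Fintype G] (hG : Nat.Coprime (Nat.card G) p)
    (φ : G →* MulAut P) (hfaithful : Function.Injective φ) :
    ∀ g : G, (∀ x : P, x ^ p = 1 → φ g x = x) → g = 1 := by
  intro g hg
  -- main claim: φ g fixes every element, by induction on the p-power order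
  have key : ∀ k : ℕ, ∀ x : P, orderOf x ∣ p ^ k → φ g x = x := by
    intro k
    induction k with
    | zero =>
      intro x hx
      simp only [pow_zero, Nat.dvd_one, orderOf_eq_one_iff] at hx
      simp [hx]
    | succ k ih =>
      intro x hx
      have hxp : orderOf (x ^ p) ∣ p ^ k := by
        apply orderOf_dvd_of_pow_eq_one
        rw [← pow_mul, ← pow_succ']
        exact orderOf_dvd_iff_pow_eq_one.mp hx
      have hfix : φ g (x ^ p) = x ^ p := ih _ hxp
      set t : P := φ g x * x⁻¹ with ht
      have htp : t ^ p = 1 := by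
        rw [ht, mul_pow, ← map_pow, hfix, inv_pow, mul_inv_cancel]
      have hft : φ g t = t := hg t htp
      have hiter : ∀ j : ℕ, (φ g ^ j) x = x * t ^ j := by
        intro j
        induction j with
        | zero => simp
        | succ j ihj =>
          have hgx : φ g x = x * t := by rw [ht, mul_comm, inv_mul_cancel_right]
          rw [pow_succ', MulAut.mul_apply, ihj, map_mul, map_pow, hft, hgx,
            pow_succ', mul_assoc]
      have hn : (φ g ^ Nat.card G) x = x := by
        have : g ^ Nat.card G = 1 := pow_card_eq_one'
        rw [← map_pow, this, map_one]; rfl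
      have htn : t ^ Nat.card G = 1 := by
        have := hiter (Nat.card G)
        rw [hn] at this
        exact left_eq_mul.mp this
      have ht1 : t = 1 := by
        rw [← orderOf_eq_one_iff]
        have h1 : orderOf t ∣ Nat.card G := orderOf_dvd_of_pow_eq_one htn
        have h2 : orderOf t ∣ p := orderOf_dvd_of_pow_eq_one htp
        have := Nat.dvd_gcd h1 h2
        rwa [Nat.Coprime.gcd_eq_one hG, Nat.dvd_one] at this
      have hgx : φ g x = x * t := by rw [ht, mul_comm, inv_mul_cancel_right]
      rw [hgx, ht1, mul_one]
  -- conclude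
  apply hfaithful
  rw [map_one]
  ext x
  obtain ⟨k, hk⟩ := hP x
  exact key k x (orderOf_dvd_of_pow_eq_one hk)
end

section
/- Let p be a prime, H a finite group of order coprime to p acting coprimely and faithfully by automorphisms on a finite abelian p-group P, and G = H ⋉ P. Then the number of conjugacy classes of G satisfies k(G) ≥ (exp(P) - 1)/(p - 1) - 1 + k(H ⋉ Ω_1(P)). -/
set_option linter.unusedSectionVars false

open SemidirectProduct

section Aux

variable {P : Type*} [CommGroup P] [Fintype P]

private lemma aux_pow_id {n n' : ℕ}
    (hmod : n * n' ≡ 1 [MOD Monoid.exponent P]) (w : P) : w ^ (n * n') = w := by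
  have h1 : orderOf w ∣ Monoid.exponent P := Monoid.order_dvd_exponent w
  have h2 : n * n' ≡ 1 [MOD orderOf w] := hmod.of_dvd h1
  calc w ^ (n * n') = w ^ 1 := pow_eq_pow_iff_modEq.mpr h2
    _ = w := pow_one w

private lemma aux_key (σ : MulAut P) (n : ℕ) (hn0 : 0 < n)
    (hσn : σ ^ n = 1) (hcop : n.Coprime (Monoid.exponent P)) (p : ℕ) (y : P)
    (hy : σ (y ^ p) = y ^ p) :
    ∃ v : P, v ^ p = 1 ∧ v * (σ v)⁻¹ = y * (σ y)⁻¹ := by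
  set m := Monoid.exponent P with hm
  have hmpos : 0 < m := Monoid.exponent_pos.mpr .of_finite
  have htpos : 0 < m.totient := Nat.totient_pos.mpr hmpos
  set n' := n ^ (m.totient - 1) with hn'
  have hmod : n * n' ≡ 1 [MOD m] := by
    have h2 : n * n' = n ^ m.totient := by
      rw [hn', ← pow_succ']
      congr 1
      omega
    rw [h2]
    exact Nat.ModEq.pow_totient hcop
  have hid : ∀ w : P, w ^ (n * n') = w := fun w => aux_pow_id hmod w
  set E : P → P := fun z => (∏ i ∈ Finset.range n, (σ ^ i) z) ^ n' with hE
  have hpowapp : ∀ (w : P), σ w = w → ∀ i : ℕ, (σ ^ i) w = w := by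
    intro w hw i
    induction i with
    | zero => rfl
    | succ k ih => rw [pow_succ, MulAut.mul_apply, hw, ih]
  have hfix : ∀ w : P, σ w = w → E w = w := by
    intro w hw
    have h1 : (∏ i ∈ Finset.range n, (σ ^ i) w) = w ^ n := by
      rw [Finset.prod_congr rfl fun i _ => hpowapp w hw i, Finset.prod_const,
        Finset.card_range]
    rw [hE]
    simp only
    rw [h1, ← pow_mul, hid]
  have hEσ : ∀ z : P, σ (E z) = E z := by
    intro z
    have h1 : σ (E z) = (∏ i ∈ Finset.range n, (σ ^ (i + 1)) z) ^ n' := by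
      rw [hE]
      simp only
      rw [map_pow, map_prod]
      congr 1
      refine Finset.prod_congr rfl fun i _ => ?_
      rw [pow_succ', MulAut.mul_apply]
    have hfn : (σ ^ n) z = (σ ^ 0) z := by rw [hσn]; rfl
    have h2 := Finset.prod_range_succ' (fun i => (σ ^ i) z) n
    have h3 := Finset.prod_range_succ (fun i => (σ ^ i) z) n
    have h4 : (∏ i ∈ Finset.range n, (σ ^ (i + 1)) z) * ((σ ^ 0) z)
        = (∏ i ∈ Finset.range n, (σ ^ i) z) * ((σ ^ 0) z) := by
      rw [← h2, h3, hfn]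
    have h5 := mul_right_cancel h4
    rw [h1, h5]
  have hEpow : ∀ (z : P) (k : ℕ), E (z ^ k) = (E z) ^ k := by
    intro z k
    have h1 : (∏ i ∈ Finset.range n, (σ ^ i) (z ^ k))
        = (∏ i ∈ Finset.range n, (σ ^ i) z) ^ k := by
      rw [← Finset.prod_pow]
      exact Finset.prod_congr rfl fun i _ => map_pow _ _ _
    rw [hE]
    simp only
    rw [h1, ← pow_mul, mul_comm k n', pow_mul]
  refine ⟨y * (E y)⁻¹, ?_, ?_⟩
  · rw [mul_pow, inv_pow, ← hEpow y p, hfix _ hy, mul_inv_cancel]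
  · have h1 : σ (y * (E y)⁻¹) = σ y * (E y)⁻¹ := by
      rw [map_mul, map_inv, hEσ]
    rw [h1]
    group

end Aux

section Omega

variable {P : Type*} [CommGroup P] [Fintype P] {H : Type*} [Group H] [Fintype H]

/-- The subgroup of elements whose `P`-component has order dividing `p`. -/
def OmegaSub (p : ℕ) (φ : H →* MulAut P) : Subgroup (P ⋊[φ] H) where
  carrier := {g : P ⋊[φ] H | g.left ^ p = 1}
  one_mem' := by simp
  mul_mem' := by
    intro a b ha hb
    simp only [Set.mem_setOf_eq, SemidirectProduct.mul_left] at *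
    rw [mul_pow, ha, ← map_pow, hb, map_one, one_mul]
  inv_mem' := by
    intro a ha
    simp only [Set.mem_setOf_eq, SemidirectProduct.inv_left] at *
    rw [← map_pow, inv_pow, ha, inv_one, map_one]

variable {φ : H →* MulAut P}

lemma finite_sd : Finite (P ⋊[φ] H) :=
  Finite.of_injective (fun g => (g.left, g.right)) (by
    intro a b hab
    obtain ⟨h1, h2⟩ := Prod.mk.injEq _ _ _ _ ▸ hab
    exact SemidirectProduct.ext h1 h2)

lemma orderOf_eq_of_isConj' {G : Type*} [Group G] {a b : G} (h : IsConj a b) :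
    orderOf a = orderOf b := by
  obtain ⟨c, hc⟩ := isConj_iff.mp h
  rw [← hc]
  have := orderOf_injective (MulAut.conj c).toMonoidHom (MulEquiv.injective _) a
  simpa using this.symm

lemma omega_not_p2 (p : ℕ) (hp : p.Prime) (hH : (Nat.card H).Coprime p)
    {g : P ⋊[φ] H} (hg : g ∈ OmegaSub p φ) : ¬ (p ^ 2 ∣ orderOf g) := by
  intro hdvd
  set n := Nat.card H with hn
  have hgn : (g ^ n).right = 1 := by
    have h0 : (g ^ n).right = g.right ^ n := by
      have h1 := map_pow (rightHom : P ⋊[φ] H →* H) g n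
      simpa using h1
    rw [h0, hn, pow_card_eq_one']
  have hgnmem : g ^ n ∈ OmegaSub p φ := pow_mem hg n
  have hgninl : g ^ n = inl ((g ^ n).left) :=
    SemidirectProduct.ext (by simp) (by simp [hgn])
  have hnp : g ^ (n * p) = 1 := by
    rw [pow_mul, hgninl, ← map_pow, hgnmem, map_one]
  have hord : orderOf g ∣ n * p := orderOf_dvd_of_pow_eq_one hnp
  have hpp : p * p ∣ n * p := by
    rw [← sq]
    exact dvd_trans hdvd hord
  obtain ⟨c, hc⟩ := hpp
  have hn2 : n = p * c := by
    apply Nat.eq_of_mul_eq_mul_right hp.pos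
    rw [hc]; ring
  have hpn : p ∣ n := ⟨c, hn2⟩
  have h1 : p ∣ Nat.gcd n p := Nat.dvd_gcd hpn dvd_rfl
  rw [Nat.Coprime.gcd_eq_one hH] at h1
  exact absurd (Nat.le_of_dvd one_pos h1) (Nat.not_le.mpr hp.one_lt)



lemma conj_inl_of (k : H) (x : P) : IsConj (inl x : P ⋊[φ] H) (inl (φ k x)) := by
  apply isConj_iff.mpr
  refine ⟨inr k, ?_⟩
  rw [← map_inv]
  exact (inl_aut k x).symm

lemma conj_inl {x y : P} (h : IsConj (inl x : P ⋊[φ] H) (inl y)) : ∃ k : H, φ k x = y := by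
  obtain ⟨c, hc⟩ := isConj_iff.mp h
  refine ⟨c.right, ?_⟩
  have h1 : (c * inl x * c⁻¹).left = y := by rw [hc]; simp
  have h2 : (c * inl x * c⁻¹).left = c.left * φ c.right x * c.left⁻¹ := by
    simp [mul_assoc]
  rw [h2] at h1
  rw [← h1, mul_comm c.left (φ c.right x), mul_assoc, mul_inv_cancel, mul_one]

lemma fusion (p : ℕ) (hp : p.Prime) (hP : IsPGroup p P) (hH : (Nat.card H).Coprime p)
    (a b : ↥(OmegaSub p φ)) (hconj : IsConj (a : P ⋊[φ] H) (b : P ⋊[φ] H)) :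
    IsConj a b := by
  haveI : Fact p.Prime := ⟨hp⟩
  set n := Nat.card H with hn
  have hn0 : 0 < n := Nat.card_pos
  obtain ⟨kk, hkk⟩ := IsPGroup.iff_card.mp hP
  have hcop : n.Coprime (Monoid.exponent P) := by
    have h1 : Monoid.exponent P ∣ p ^ kk := hkk ▸ Group.exponent_dvd_nat_card
    exact Nat.Coprime.coprime_dvd_right h1 (hH.pow_right kk)
  obtain ⟨c, hc⟩ := isConj_iff.mp hconj
  have hkmem : inr c.right ∈ OmegaSub p φ := by
    show (inr c.right : P ⋊[φ] H).left ^ p = 1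
    simp
  set a₁ : ↥(OmegaSub p φ) := ⟨inr c.right, hkmem⟩ * a * ⟨inr c.right, hkmem⟩⁻¹ with ha₁
  have hstep1 : IsConj a a₁ := isConj_iff.mpr ⟨⟨inr c.right, hkmem⟩, rfl⟩
  have hca : (a₁ : P ⋊[φ] H) = inr c.right * (a : P ⋊[φ] H) * (inr c.right)⁻¹ := rfl
  have hc' : inl c.left * (a₁ : P ⋊[φ] H) * (inl c.left)⁻¹ = (b : P ⋊[φ] H) := by
    rw [hca, ← hc]
    conv_rhs => rw [← inl_left_mul_inr_right c]
    group
  set x' := (a₁ : P ⋊[φ] H).left with hx'def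
  set h' := (a₁ : P ⋊[φ] H).right with hh'def
  have hx'p : x' ^ p = 1 := a₁.2
  set y := c.left with hy
  have hbl : (b : P ⋊[φ] H).left = y * x' * φ h' y⁻¹ := by
    rw [← hc']
    simp [mul_assoc]
    rfl
  have hbr : (b : P ⋊[φ] H).right = h' := by
    rw [← hc']
    simp
    rfl
  have hfixyp : φ h' (y ^ p) = y ^ p := by
    have hb2 : ((b : P ⋊[φ] H).left) ^ p = 1 := b.2
    rw [hbl] at hb2
    have hkey : y ^ p * (φ h' (y ^ p))⁻¹ = 1 := by
      calc y ^ p * (φ h' (y ^ p))⁻¹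
          = y ^ p * x' ^ p * (φ h' y⁻¹) ^ p := by
            rw [hx'p, mul_one, ← map_pow, inv_pow, map_inv]
        _ = (y * x' * φ h' y⁻¹) ^ p := by rw [mul_pow, mul_pow]
        _ = 1 := hb2
    exact (mul_inv_eq_one.mp hkey).symm
  have hσn : (φ h') ^ n = 1 := by
    rw [← map_pow, hn, pow_card_eq_one', map_one]
  obtain ⟨v, hvp, hv⟩ := aux_key (φ h') n hn0 hσn hcop p y hfixyp
  have hvmem : inl v ∈ OmegaSub p φ := by
    show (inl v : P ⋊[φ] H).left ^ p = 1
    simpa using hvp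
  have hstep2 : IsConj a₁ b := by
    apply isConj_iff.mpr
    refine ⟨⟨inl v, hvmem⟩, ?_⟩
    apply Subtype.ext
    show inl v * (a₁ : P ⋊[φ] H) * (inl v)⁻¹ = (b : P ⋊[φ] H)
    have hleft : (inl v * (a₁ : P ⋊[φ] H) * (inl v)⁻¹).left = v * x' * φ h' v⁻¹ := by
      simp [mul_assoc]
      rfl
    have hright : (inl v * (a₁ : P ⋊[φ] H) * (inl v)⁻¹).right = h' := by
      simp
      rfl
    apply SemidirectProduct.ext
    · rw [hleft, hbl]
      have e1 : v * x' * φ h' v⁻¹ = x' * (v * (φ h' v)⁻¹) := by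
        rw [map_inv]
        ac_rfl
      have e2 : y * x' * φ h' y⁻¹ = x' * (y * (φ h' y)⁻¹) := by
        rw [map_inv]
        ac_rfl
      rw [e1, e2, hv]
    · rw [hright, hbr]
  exact hstep1.trans hstep2

lemma aux_sum {p : ℕ} (hp2 : 2 ≤ p) (e : ℕ) :
    (p ^ e - 1) / (p - 1) - 1 ≤ ∑ a ∈ Finset.Icc 2 e, p ^ (a - 1) := by
  rw [← Nat.geomSum_eq hp2]
  induction e with
  | zero => simp
  | succ m ih =>
    rcases Nat.eq_zero_or_pos m with rfl | hm
    · simp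
    · rw [Finset.sum_range_succ, Finset.sum_Icc_succ_top (by omega : 2 ≤ m + 1)]
      have h1 : 1 ≤ ∑ i ∈ Finset.range m, p ^ i := by
        have := Finset.single_le_sum (f := fun i => p ^ i)
          (fun i _ => Nat.zero_le _) (Finset.mem_range.mpr hm)
        simpa using this
      have h2 : m + 1 - 1 = m := by omega
      rw [h2]
      omega


end Omega

theorem stmt_14 (p : ℕ) (hp : p.Prime)
    (P : Type*) [CommGroup P] [Fintype P] (hP : IsPGroup p P)
    (H : Type*) [Group H] [Fintype H] (hH : Nat.Coprime (Nat.card H) p)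
    (φ : H →* MulAut P) (hfaithful : Function.Injective φ)
    (horb : ∀ a : ℕ, 2 ≤ a → p ^ a ∣ Monoid.exponent P →
      (letI : MulAction H P := MulAction.compHom P φ
       p ^ (a - 1) ≤ Nat.card {ω : MulAction.orbitRel.Quotient H P //
        ∃ x : P, orderOf x = p ^ a ∧ Quotient.mk'' x = ω})) :
    (Monoid.exponent P - 1) / (p - 1) - 1 +
      Nat.card (ConjClasses ↥(Subgroup.closure {g : P ⋊[φ] H | g.left ^ p = 1})) ≤
    Nat.card (ConjClasses (P ⋊[φ] H)) := by
  classical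
  haveI : Fact p.Prime := ⟨hp⟩
  haveI : Finite (P ⋊[φ] H) := finite_sd
  letI : MulAction H P := MulAction.compHom P φ
  have hclos : Subgroup.closure {g : P ⋊[φ] H | g.left ^ p = 1} = OmegaSub p φ :=
    Subgroup.closure_eq (OmegaSub p φ)
  rw [hclos]
  obtain ⟨kk, hkk⟩ := IsPGroup.iff_card.mp hP
  have hdvd : Monoid.exponent P ∣ p ^ kk := hkk ▸ Group.exponent_dvd_nat_card
  obtain ⟨e, hekk, hexp⟩ := (Nat.dvd_prime_pow hp).mp hdvd
  set Q : ℕ → Type _ := fun a => {ω : MulAction.orbitRel.Quotient H P //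
    ∃ x : P, orderOf x = p ^ a ∧ Quotient.mk'' x = ω} with hQ
  have hsmul : ∀ (k : H) (x : P), k • x = φ k x := fun _ _ => rfl
  set Φ : MulAction.orbitRel.Quotient H P → ConjClasses (P ⋊[φ] H) :=
    Quotient.lift (fun x : P => ConjClasses.mk (inl x)) (by
      intro x z hxz
      obtain ⟨k, hk⟩ := MulAction.orbitRel_apply.mp hxz
      have hk' : φ k z = x := hk
      rw [ConjClasses.mk_eq_mk_iff_isConj, ← hk']
      exact (conj_inl_of k z).symm) with hΦ
  have hΦmk : ∀ x : P, Φ (Quotient.mk'' x) = ConjClasses.mk (inl x) := fun x => rfl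
  set F : ((a : ↥(Finset.Icc 2 e)) × Q ↑a) ⊕ ConjClasses ↥(OmegaSub p φ) →
      ConjClasses (P ⋊[φ] H) :=
    Sum.elim (fun d => Φ d.2.1) (ConjClasses.map (OmegaSub p φ).subtype) with hF
  have hmapmk : ∀ w : ↥(OmegaSub p φ),
      ConjClasses.map (OmegaSub p φ).subtype (ConjClasses.mk w)
        = ConjClasses.mk (w : P ⋊[φ] H) := fun w => rfl
  have hordinl : ∀ x : P, orderOf (inl x : P ⋊[φ] H) = orderOf x :=
    fun x => orderOf_injective inl inl_injective x
  have hFinj : Function.Injective F := by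
    rintro (⟨a, ω, hω⟩ | c) (⟨a', ω', hω'⟩ | c') h <;>
      simp only [hF, Sum.elim_inl, Sum.elim_inr] at h
    · obtain ⟨x, hx, hxω⟩ := hω
      obtain ⟨x', hx', hxω'⟩ := hω'
      rw [← hxω, ← hxω', hΦmk, hΦmk, ConjClasses.mk_eq_mk_iff_isConj] at h
      have hord : orderOf x = orderOf x' := by
        rw [← hordinl, ← hordinl]
        exact orderOf_eq_of_isConj' h
      have haa : (a : ℕ) = (a' : ℕ) := by
        apply Nat.pow_right_injective hp.two_le
        show p ^ (a : ℕ) = p ^ (a' : ℕ)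
        rw [← hx, ← hx', hord]
      obtain rfl : a = a' := Subtype.ext haa
      obtain ⟨k, hk⟩ := conj_inl h
      have hmem : x' ∈ MulAction.orbit H x := ⟨k, by show k • x = x'; rw [hsmul]; exact hk⟩
      have hωeq : ω = ω' := by
        rw [← hxω, ← hxω']
        exact (Quotient.sound' (MulAction.orbitRel_apply.mpr hmem)).symm
      subst hωeq
      rfl
    · exfalso
      obtain ⟨x, hx, hxω⟩ := hω
      obtain ⟨w, rfl⟩ := ConjClasses.mk_surjective c'
      rw [← hxω, hΦmk, hmapmk, ConjClasses.mk_eq_mk_iff_isConj] at h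
      have hord : orderOf (w : P ⋊[φ] H) = p ^ (a : ℕ) := by
        rw [← orderOf_eq_of_isConj' h, hordinl, hx]
      have ha2 : 2 ≤ (a : ℕ) := (Finset.mem_Icc.mp a.2).1
      exact omega_not_p2 p hp hH w.2 (hord ▸ pow_dvd_pow p ha2)
    · exfalso
      obtain ⟨x, hx, hxω⟩ := hω'
      obtain ⟨w, rfl⟩ := ConjClasses.mk_surjective c
      rw [← hxω, hΦmk, hmapmk, ConjClasses.mk_eq_mk_iff_isConj] at h
      have hord : orderOf (w : P ⋊[φ] H) = p ^ (a' : ℕ) := by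
        rw [orderOf_eq_of_isConj' h, hordinl, hx]
      have ha2 : 2 ≤ (a' : ℕ) := (Finset.mem_Icc.mp a'.2).1
      exact omega_not_p2 p hp hH w.2 (hord ▸ pow_dvd_pow p ha2)
    · obtain ⟨w, rfl⟩ := ConjClasses.mk_surjective c
      obtain ⟨w', rfl⟩ := ConjClasses.mk_surjective c'
      rw [hmapmk, hmapmk, ConjClasses.mk_eq_mk_iff_isConj] at h
      exact congrArg Sum.inr
        (ConjClasses.mk_eq_mk_iff_isConj.mpr (fusion p hp hP hH w w' h))
  have hcard := Nat.card_le_card_of_injective F hFinj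
  have hsum : Nat.card (((a : ↥(Finset.Icc 2 e)) × Q ↑a) ⊕ ConjClasses ↥(OmegaSub p φ))
      = Nat.card ((a : ↥(Finset.Icc 2 e)) × Q ↑a)
        + Nat.card (ConjClasses ↥(OmegaSub p φ)) := Nat.card_sum
  letI : ∀ a : ↥(Finset.Icc 2 e), Fintype (Q ↑a) := fun a => Fintype.ofFinite _
  have hsig : Nat.card ((a : ↥(Finset.Icc 2 e)) × Q ↑a)
      = ∑ a ∈ Finset.Icc 2 e, Nat.card (Q a) := by
    rw [Nat.card_eq_fintype_card, Fintype.card_sigma,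
      ← Finset.sum_coe_sort (Finset.Icc 2 e) (fun a => Nat.card (Q a))]
    exact Finset.sum_congr rfl fun a _ => Nat.card_eq_fintype_card.symm
  have hbound : ∀ a ∈ Finset.Icc 2 e, p ^ (a - 1) ≤ Nat.card (Q a) := by
    intro a ha
    obtain ⟨ha2, hae⟩ := Finset.mem_Icc.mp ha
    exact horb a ha2 (by rw [hexp]; exact pow_dvd_pow p hae)
  calc (Monoid.exponent P - 1) / (p - 1) - 1 + Nat.card (ConjClasses ↥(OmegaSub p φ))
      ≤ (∑ a ∈ Finset.Icc 2 e, p ^ (a - 1))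
        + Nat.card (ConjClasses ↥(OmegaSub p φ)) := by
        have := aux_sum hp.two_le e
        rw [hexp]
        omega
    _ ≤ (∑ a ∈ Finset.Icc 2 e, Nat.card (Q a))
        + Nat.card (ConjClasses ↥(OmegaSub p φ)) := by
        have := Finset.sum_le_sum hbound
        omega
    _ = Nat.card (((a : ↥(Finset.Icc 2 e)) × Q ↑a) ⊕ ConjClasses ↥(OmegaSub p φ)) := by
        rw [hsum, hsig]
    _ ≤ Nat.card (ConjClasses (P ⋊[φ] H)) := hcard
end
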